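/- Let $s > 2$, $1/2 < b \leq b' < 1$. Let $m \neq 0$, $n \neq 0$ be integers and $\rho_{m,n} = (|m|+|n|)^{2s}$. Then there is a constant $C$ depending only on $s, b, b'$ such that $\frac{1}{|n|^{4 - 4b' + 4b}} \sum_{\substack{(m',n') : |m'| > \frac{3}{2}|m|, \ n' \neq 0, \ n' \neq n, \ n'/n \geq 1/2}} \frac{m^2 \, \rho_{m,n}}{\rho_{m',n'}\, \rho_{m-m', n-n'}} \leq C$. -/

import Mathlib

open Real

private lemma sum1d {u : ℝ} (hu : 1 < u) :
    Summable (fun x : ℤ => ((1:ℝ) + |(x:ℝ)|) ^ (-u)) := by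
  have hnat : Summable (fun n : ℕ => ((1:ℝ) + (n:ℝ)) ^ (-u)) := by
    have h := (summable_nat_add_iff (f := fun n : ℕ => ((n:ℝ)) ^ (-u)) 1).mpr
      (summable_nat_rpow.mpr (by linarith))
    refine h.congr fun n => ?_
    push_cast; ring_nf
  apply Summable.of_nat_of_neg
  · refine hnat.congr fun n => ?_
    simp [abs_of_nonneg (by positivity : (0:ℝ) ≤ (n:ℝ))]
  · refine hnat.congr fun n => ?_
    push_cast
    rw [abs_neg, abs_of_nonneg (by positivity : (0:ℝ) ≤ (n:ℝ))]

private lemma sum2d {t : ℝ} (ht : 2 < t) :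
    Summable (fun p : ℤ × ℤ => ((1:ℝ) + |(p.1:ℝ)| + |(p.2:ℝ)|) ^ (-t)) := by
  have hu : 1 < t/2 := by linarith
  have h := (sum1d hu).mul_of_nonneg (sum1d hu)
    (fun x => by positivity) (fun x => by positivity)
  refine Summable.of_nonneg_of_le (fun p => by positivity) (fun p => ?_) h
  have h1 : (0:ℝ) < 1 + |(p.1:ℝ)| := by positivity
  have h2 : (0:ℝ) < 1 + |(p.2:ℝ)| := by positivity
  have h3 : (0:ℝ) < 1 + |(p.1:ℝ)| + |(p.2:ℝ)| := by positivity
  have e1 : ((1:ℝ) + |(p.1:ℝ)| + |(p.2:ℝ)|) ^ (-t)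
      = ((1:ℝ) + |(p.1:ℝ)| + |(p.2:ℝ)|) ^ (-(t/2)) *
        ((1:ℝ) + |(p.1:ℝ)| + |(p.2:ℝ)|) ^ (-(t/2)) := by
    rw [← Real.rpow_add h3]; ring_nf
  rw [e1]
  have b1 : ((1:ℝ) + |(p.1:ℝ)| + |(p.2:ℝ)|) ^ (-(t/2)) ≤ ((1:ℝ) + |(p.1:ℝ)|) ^ (-(t/2)) :=
    Real.rpow_le_rpow_of_nonpos h1 (by linarith [abs_nonneg (p.2:ℝ)]) (by linarith)
  have b2 : ((1:ℝ) + |(p.1:ℝ)| + |(p.2:ℝ)|) ^ (-(t/2)) ≤ ((1:ℝ) + |(p.2:ℝ)|) ^ (-(t/2)) :=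
    Real.rpow_le_rpow_of_nonpos h2 (by linarith [abs_nonneg (p.1:ℝ)]) (by linarith)
  exact mul_le_mul b1 b2 (by positivity) (by positivity)

private lemma key (s A B M R : ℝ) (hs : 2 < s) (hM : 1 ≤ M) (hR0 : 0 ≤ R)
    (hRB : R ≤ 2*B) (hA : M/2 ≤ A) (hA1 : 1 ≤ A) (hB1 : 1 ≤ B) :
    M^2 * R^(2*s) / (A^(2*s) * B^(2*s)) ≤ 2^(4*s) * (1+A)^(-(2*s-2)) := by
  have hApos : (0:ℝ) < A := by linarith
  have hBpos : (0:ℝ) < B := by linarith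
  have hR1 : R^(2*s) ≤ 2^(2*s) * B^(2*s) := by
    rw [← Real.mul_rpow (by norm_num) hBpos.le]
    exact Real.rpow_le_rpow hR0 hRB (by linarith)
  have hA3 : A^(2*s) = A^(2:ℝ) * A^(2*s-2) := by
    rw [← Real.rpow_add hApos]; ring_nf
  have hA2 : A^(2:ℝ) = A^2 := by
    rw [show ((2:ℝ)) = ((2:ℕ):ℝ) by norm_num, Real.rpow_natCast]
  have hM2 : M^2 ≤ 4 * A^(2:ℝ) := by rw [hA2]; nlinarith
  have hAt : A^(-(2*s-2)) ≤ 2^(2*s-2) * (1+A)^(-(2*s-2)) := by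
    have h1 : (1+A)^(-(2*s-2)) ≥ (2*A)^(-(2*s-2)) :=
      Real.rpow_le_rpow_of_nonpos (by positivity) (by linarith) (by linarith)
    have h2 : (2*A)^(-(2*s-2)) = 2^(-(2*s-2)) * A^(-(2*s-2)) :=
      Real.mul_rpow (by norm_num) hApos.le
    have h3 : 2^(-(2*s-2)) * A^(-(2*s-2)) ≤ (1+A)^(-(2*s-2)) := by rw [← h2]; exact h1
    have h4 : (0:ℝ) < 2^(-(2*s-2)) := by positivity
    calc A^(-(2*s-2)) = 2^(2*s-2) * (2^(-(2*s-2)) * A^(-(2*s-2))) := by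
          rw [← mul_assoc, ← Real.rpow_add (by norm_num : (0:ℝ)<2)]
          simp
      _ ≤ 2^(2*s-2) * (1+A)^(-(2*s-2)) := by
          exact mul_le_mul_of_nonneg_left h3 (by positivity)
  have hAneg : A^(-(2*s-2)) = (A^(2*s-2))⁻¹ := by
    rw [Real.rpow_neg hApos.le]
  calc M^2 * R^(2*s) / (A^(2*s) * B^(2*s))
      ≤ M^2 * (2^(2*s) * B^(2*s)) / (A^(2*s) * B^(2*s)) := by
        gcongr
    _ = M^2 * 2^(2*s) / A^(2*s) := by
        field_simp
    _ = (M^2 / A^(2:ℝ)) * 2^(2*s) * A^(-(2*s-2)) := by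
        rw [hA3, hAneg]
        field_simp
    _ ≤ 4 * 2^(2*s) * A^(-(2*s-2)) := by
        have : M^2 / A^(2:ℝ) ≤ 4 := by
          rw [div_le_iff₀ (by positivity)]
          linarith
        apply mul_le_mul_of_nonneg_right ?_ (by positivity)
        exact mul_le_mul_of_nonneg_right this (by positivity)
    _ ≤ 4 * 2^(2*s) * (2^(2*s-2) * (1+A)^(-(2*s-2))) := by
        apply mul_le_mul_of_nonneg_left hAt (by positivity)
    _ = 2^(4*s) * (1+A)^(-(2*s-2)) := by
        have h4 : (4:ℝ) = (2:ℝ)^((2:ℕ):ℝ) := by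
          rw [Real.rpow_natCast]; norm_num
        rw [← mul_assoc, h4, ← Real.rpow_add (by norm_num : (0:ℝ)<2),
          ← Real.rpow_add (by norm_num : (0:ℝ)<2)]
        congr 1
        push_cast
        ring

set_option maxHeartbeats 1000000 in
theorem stmt_13 (s b b' : ℝ) (hs : 2 < s) (hb1 : 1/2 < b) (hbb' : b ≤ b') (hb' : b' < 1) :
    ∃ C > 0, ∀ (m n : ℤ), m ≠ 0 → n ≠ 0 →
      (1 / |(n:ℝ)| ^ (4 - 4*b' + 4*b)) *
        ∑' p : ℤ × ℤ,
          (if |p.1| > (3:ℝ)/2 * |(m:ℝ)| ∧ p.2 ≠ 0 ∧ p.2 ≠ n ∧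
              (1:ℝ)/2 ≤ (p.2:ℝ)/(n:ℝ) then
            (m:ℝ)^2 * (|(m:ℝ)| + |(n:ℝ)|) ^ (2*s) /
              ((|(p.1:ℝ)| + |(p.2:ℝ)|) ^ (2*s) *
               (|(m:ℝ) - p.1| + |(n:ℝ) - p.2|) ^ (2*s))
          else 0) ≤ C := by
  set t := 2*s - 2 with ht_def
  have ht : 2 < t := by simp [ht_def]; linarith
  set G : ℤ × ℤ → ℝ := fun p => ((1:ℝ) + |(p.1:ℝ)| + |(p.2:ℝ)|) ^ (-t) with hG_def
  have hGsum : Summable G := sum2d ht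
  have hGnonneg : ∀ p, 0 ≤ G p := fun p => by positivity
  have hGt0 : 0 ≤ ∑' p, G p := tsum_nonneg hGnonneg
  have h2pow : (0:ℝ) < 2^(4*s) := Real.rpow_pos_of_pos (by norm_num) _
  refine ⟨2^(4*s) * (2 * ∑' p, G p) + 1, by nlinarith, ?_⟩
  intro m n hm hn
  -- basic facts
  have hm1 : (1:ℝ) ≤ |(m:ℝ)| := by
    rw [← Int.cast_abs]; exact_mod_cast Int.one_le_abs hm
  have hn1 : (1:ℝ) ≤ |(n:ℝ)| := by
    rw [← Int.cast_abs]; exact_mod_cast Int.one_le_abs hn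
  -- the shifted majorant
  set G' : ℤ × ℤ → ℝ := fun p => G (m - p.1, n - p.2) with hG'_def
  have hG'sum : Summable G' := by
    refine ((((Equiv.subLeft m).prodCongr (Equiv.subLeft n)).summable_iff
      (f := G)).mpr hGsum).congr fun p => ?_
    rfl
  have hG'tsum : ∑' p, G' p = ∑' p, G p := by
    rw [← Equiv.tsum_eq ((Equiv.subLeft m).prodCongr (Equiv.subLeft n)) G]
    exact tsum_congr fun p => rfl
  set F : ℤ × ℤ → ℝ := fun p =>
    (if ((|p.1| : ℤ) : ℝ) > (3:ℝ)/2 * |(m:ℝ)| ∧ p.2 ≠ 0 ∧ p.2 ≠ n ∧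
        (1:ℝ)/2 ≤ (p.2:ℝ)/(n:ℝ) then
      (m:ℝ)^2 * (|(m:ℝ)| + |(n:ℝ)|) ^ (2*s) /
        ((|(p.1:ℝ)| + |(p.2:ℝ)|) ^ (2*s) *
         (|(m:ℝ) - p.1| + |(n:ℝ) - p.2|) ^ (2*s))
    else 0) with hF_def
  have hFnonneg : ∀ p, 0 ≤ F p := by
    intro p
    simp only [hF_def]
    split
    · positivity
    · exact le_refl 0
  have hFle : ∀ p, F p ≤ 2^(4*s) * (G p + G' p) := by
    intro p
    simp only [hF_def]
    split
    · rename_i hcond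
      obtain ⟨h1, h2, h3, h4⟩ := hcond
      rw [Int.cast_abs] at h1
      set A : ℝ := |(p.1:ℝ)| + |(p.2:ℝ)| with hA_def
      set B : ℝ := |(m:ℝ) - p.1| + |(n:ℝ) - p.2| with hB_def
      have hA1 : (1:ℝ) ≤ A := by
        have : (3:ℝ)/2 * 1 ≤ (3:ℝ)/2 * |(m:ℝ)| := by linarith
        have h5 := abs_nonneg (p.2:ℝ)
        simp only [hA_def]; linarith
      have hmm' : |(m:ℝ)| / 2 ≤ |(m:ℝ) - p.1| := by
        have := abs_sub_abs_le_abs_sub (p.1:ℝ) (m:ℝ)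
        rw [abs_sub_comm] at this
        linarith
      have hB1 : (1:ℝ) ≤ B := by
        have hnn' : (1:ℝ) ≤ |(n:ℝ) - p.2| := by
          have : ((n - p.2 : ℤ):ℝ) = (n:ℝ) - p.2 := by push_cast; ring
          rw [← this, ← Int.cast_abs]
          exact_mod_cast Int.one_le_abs (sub_ne_zero.mpr (Ne.symm h3))
        have := abs_nonneg ((m:ℝ) - p.1)
        simp only [hB_def]; linarith
      have hAm : |(m:ℝ)|/2 ≤ A := by
        have h5 := abs_nonneg (p.2:ℝ)
        simp only [hA_def]; linarith
      have hBm : |(m:ℝ)|/2 ≤ B := by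
        have := abs_nonneg ((n:ℝ) - p.2)
        simp only [hB_def]; linarith
      have hR0 : (0:ℝ) ≤ |(m:ℝ)| + |(n:ℝ)| := by positivity
      have hRAB : |(m:ℝ)| + |(n:ℝ)| ≤ A + B := by
        have hmtri : |(m:ℝ)| ≤ |(p.1:ℝ)| + |(m:ℝ) - p.1| := by
          have := abs_add_le (p.1:ℝ) ((m:ℝ) - p.1)
          simpa using this
        have hntri : |(n:ℝ)| ≤ |(p.2:ℝ)| + |(n:ℝ) - p.2| := by
          have := abs_add_le (p.2:ℝ) ((n:ℝ) - p.2)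
          simpa using this
        simp only [hA_def, hB_def]; linarith
      have hGp : G p = (1 + A)^(-t) := by
        simp only [hG_def, hA_def]; ring_nf
      have hG'p : G' p = (1 + B)^(-t) := by
        simp only [hG'_def, hG_def, hB_def]
        push_cast
        ring_nf
      have hm2abs : (m:ℝ)^2 = |(m:ℝ)|^2 := (sq_abs _).symm
      rcases le_total A B with hle | hle
      · have hRB : |(m:ℝ)| + |(n:ℝ)| ≤ 2*B := by linarith
        have := key s A B |(m:ℝ)| (|(m:ℝ)| + |(n:ℝ)|) hs hm1 hR0 hRB hAm hA1 hB1
        rw [hm2abs]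
        calc |(m:ℝ)|^2 * (|(m:ℝ)| + |(n:ℝ)|) ^ (2*s) / (A^(2*s) * B^(2*s))
            ≤ 2^(4*s) * (1+A)^(-(2*s-2)) := this
          _ = 2^(4*s) * G p := by rw [hGp, ht_def]
          _ ≤ 2^(4*s) * (G p + G' p) := by
              exact mul_le_mul_of_nonneg_left
                (le_add_of_nonneg_right (hGnonneg _)) (by positivity)
      · have hRB : |(m:ℝ)| + |(n:ℝ)| ≤ 2*A := by linarith
        have := key s B A |(m:ℝ)| (|(m:ℝ)| + |(n:ℝ)|) hs hm1 hR0 hRB hBm hB1 hA1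
        rw [hm2abs]
        calc |(m:ℝ)|^2 * (|(m:ℝ)| + |(n:ℝ)|) ^ (2*s) / (A^(2*s) * B^(2*s))
            = |(m:ℝ)|^2 * (|(m:ℝ)| + |(n:ℝ)|) ^ (2*s) / (B^(2*s) * A^(2*s)) := by ring_nf
          _ ≤ 2^(4*s) * (1+B)^(-(2*s-2)) := this
          _ = 2^(4*s) * G' p := by rw [hG'p, ht_def]
          _ ≤ 2^(4*s) * (G p + G' p) := by
              exact mul_le_mul_of_nonneg_left
                (le_add_of_nonneg_left (hGnonneg _)) (by positivity)
    · positivity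
  have hMajSum : Summable (fun p => 2^(4*s) * (G p + G' p)) :=
    ((hGsum.add hG'sum).mul_left _)
  have hFsum : Summable F := Summable.of_nonneg_of_le hFnonneg hFle hMajSum
  have hFtsum : ∑' p, F p ≤ 2^(4*s) * (2 * ∑' p, G p) := by
    calc ∑' p, F p ≤ ∑' p, 2^(4*s) * (G p + G' p) := Summable.tsum_le_tsum hFle hFsum hMajSum
      _ = 2^(4*s) * (∑' p, G p + ∑' p, G' p) := by
          rw [tsum_mul_left, Summable.tsum_add hGsum hG'sum]
      _ = 2^(4*s) * (2 * ∑' p, G p) := by rw [hG'tsum]; ring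
  have hnpos : (0:ℝ) < |(n:ℝ)| ^ (4 - 4*b' + 4*b) := by
    have : (0:ℝ) < |(n:ℝ)| := by linarith
    positivity
  have hfac : 1 / |(n:ℝ)| ^ (4 - 4*b' + 4*b) ≤ 1 := by
    rw [div_le_one hnpos]
    exact Real.one_le_rpow hn1 (by linarith)
  have hFt0 : 0 ≤ ∑' p, F p := tsum_nonneg hFnonneg
  calc (1 / |(n:ℝ)| ^ (4 - 4*b' + 4*b)) * ∑' p, F p
      ≤ 1 * ∑' p, F p := mul_le_mul_of_nonneg_right hfac hFt0
    _ = ∑' p, F p := one_mul _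
    _ ≤ 2^(4*s) * (2 * ∑' p, G p) := hFtsum
    _ ≤ 2^(4*s) * (2 * ∑' p, G p) + 1 := by linarith
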